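/- Let X be a locally convex space over the real or complex numbers and E a nonempty subset of X. The convex hull of E is dense in X if and only if for every nonzero continuous linear functional f on X, sup Re(f(E)) = ∞. -/

import Mathlib

open RCLike

/-- Extend a continuous real-linear functional on a topological `𝕜`-vector space to a
continuous `𝕜`-linear functional, with real part the original functional. -/
noncomputable def myExtendTo𝕜 {𝕜 : Type*} [RCLike 𝕜] {X : Type*} [AddCommGroup X] [Module 𝕜 X]
    [Module ℝ X] [IsScalarTower ℝ 𝕜 X] [TopologicalSpace X] [IsTopologicalAddGroup X]
    [ContinuousSMul 𝕜 X] (g : X →L[ℝ] ℝ) : X →L[𝕜] 𝕜 :=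
  { toLinearMap := LinearMap.extendTo𝕜' (g.toLinearMap)
    cont := by
      have : (fun x : X => ((g x : 𝕜) - (I : 𝕜) * (g ((I : 𝕜) • x) : 𝕜))) =
          (LinearMap.extendTo𝕜' (𝕜 := 𝕜) (g.toLinearMap) : X → 𝕜) := by
        funext x; rfl
      show Continuous (LinearMap.extendTo𝕜' (𝕜 := 𝕜) (g.toLinearMap) : X → 𝕜)
      rw [← this]
      fun_prop }

theorem myExtendTo𝕜_re {𝕜 : Type*} [RCLike 𝕜] {X : Type*} [AddCommGroup X] [Module 𝕜 X]
    [Module ℝ X] [IsScalarTower ℝ 𝕜 X] [TopologicalSpace X] [IsTopologicalAddGroup X]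
    [ContinuousSMul 𝕜 X] (g : X →L[ℝ] ℝ) (x : X) :
    RCLike.re (myExtendTo𝕜 (𝕜 := 𝕜) g x) = g x :=
  LinearMap.extendTo𝕜'_apply_re _ x

/-- **Hahn–Banach characterization of dense convex hulls.**
Let `X` be a locally convex space over `𝕜 = ℝ` or `ℂ`, and `E ⊆ X` nonempty.  The convex
hull of `E` is dense in `X` iff for every nonzero continuous linear functional `f` on `X`,
`sup Re (f '' E) = ∞`, i.e. `Re ∘ f` is unbounded above on `E`. -/
theorem convexHull_dense_iff_sup_re_eq_top
    {𝕜 : Type*} [RCLike 𝕜] {X : Type*} [AddCommGroup X] [Module 𝕜 X] [Module ℝ X]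
    [IsScalarTower ℝ 𝕜 X] [TopologicalSpace X] [IsTopologicalAddGroup X]
    [ContinuousSMul 𝕜 X] [ContinuousSMul ℝ X] [LocallyConvexSpace ℝ X]
    (E : Set X) (hE : E.Nonempty) :
    Dense (convexHull ℝ E) ↔
      ∀ f : X →L[𝕜] 𝕜, f ≠ 0 → ∀ M : ℝ, ∃ x ∈ E, M < RCLike.re (f x) := by
  constructor
  · intro hdense f hf M
    by_contra hcon
    push_neg at hcon
    -- the closed convex set where `re ∘ f ≤ M` contains `E`, hence everything
    set g : X →L[ℝ] ℝ := RCLike.reCLM.comp (f.restrictScalars ℝ) with hg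
    have hgx : ∀ x : X, g x = RCLike.re (f x) := fun x => rfl
    have hconv : Convex ℝ {x : X | g x ≤ M} := by
      have := (convex_Iic M).linear_preimage (g : X →ₗ[ℝ] ℝ)
      simpa [Set.preimage, Set.Iic] using this
    have hclosed : IsClosed {x : X | g x ≤ M} := isClosed_Iic.preimage g.continuous
    have hsub : closure (convexHull ℝ E) ⊆ {x : X | g x ≤ M} := by
      apply closure_minimal _ hclosed
      apply convexHull_min _ hconv
      intro x hx
      simpa [hgx] using hcon x hx
    have hall : ∀ x : X, RCLike.re (f x) ≤ M := by
      intro x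
      have : x ∈ closure (convexHull ℝ E) := hdense x
      simpa [hgx] using hsub this
    -- but `f ≠ 0` means `re ∘ f` is unbounded
    obtain ⟨x, hx⟩ : ∃ x, f x ≠ 0 := by
      by_contra h
      push_neg at h
      exact hf (by ext x; simp [h x])
    have : f ((((M + 1 : ℝ) : 𝕜) / f x) • x) = ((M + 1 : ℝ) : 𝕜) := by
      rw [map_smul, smul_eq_mul, div_mul_cancel₀ _ hx]
    have h2 := hall ((((M + 1 : ℝ) : 𝕜) / f x) • x)
    rw [this, RCLike.ofReal_re] at h2
    linarith
  · intro h
    rw [dense_iff_closure_eq]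
    by_contra hne
    obtain ⟨x₀, hx₀⟩ : ∃ x₀, x₀ ∉ closure (convexHull ℝ E) := by
      by_contra h'
      push_neg at h'
      exact hne (Set.eq_univ_of_forall h')
    obtain ⟨g, u, hgu, hux⟩ := geometric_hahn_banach_closed_point
      ((convex_convexHull ℝ E).closure) isClosed_closure hx₀
    set f : X →L[𝕜] 𝕜 := myExtendTo𝕜 g with hf
    have hre : ∀ x : X, RCLike.re (f x) = g x := myExtendTo𝕜_re g
    have hfne : f ≠ 0 := by
      intro h0
      obtain ⟨a, ha⟩ := hE
      have ha' : g a < u := hgu a (subset_closure (subset_convexHull ℝ E ha))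
      have : g a = 0 := by rw [← hre a, h0]; simp
      have : g x₀ = 0 := by rw [← hre x₀, h0]; simp
      linarith [hgu a (subset_closure (subset_convexHull ℝ E ha))]
    obtain ⟨x, hxE, hxu⟩ := h f hfne u
    rw [hre x] at hxu
    exact absurd (hgu x (subset_closure (subset_convexHull ℝ E hxE))) (not_lt.2 hxu.le)
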